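/- arXiv:2103.05350 — 2 statements merged into one kernel-verified Lean document; each statement's English description precedes it below -/
import Mathlib

section
/- If u ∈ M_{2n}(ℂ) is a self-adjoint unitary commuting with the quaternionic structure Θ on ℂ^{2n}, then its +1-eigenspace has even complex dimension. -/
open Matrix

/-- The matrix `J = [[0, -1ₙ],[1ₙ, 0]]` on `ℂ^{2n} = ℂⁿ ⊕ ℂⁿ`. -/
noncomputable def Jmat (n : ℕ) : Matrix (Fin n ⊕ Fin n) (Fin n ⊕ Fin n) ℂ :=
  Matrix.fromBlocks 0 (-1) 1 0

/-- The standard quaternionic structure `Θ = J ∘ conj` on `ℂ^{2n}`. -/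
noncomputable def ThetaVec (n : ℕ) (v : Fin n ⊕ Fin n → ℂ) : Fin n ⊕ Fin n → ℂ :=
  (Jmat n).mulVec (fun i => starRingEnd ℂ (v i))

lemma nondeg_of_alt_sepLeft {V : Type} [AddCommGroup V] [Module ℂ V]
    (B : LinearMap.BilinForm ℂ V) (h : B.IsAlt) (hl : B.SeparatingLeft) : B.Nondegenerate :=
  (LinearMap.IsRefl.nondegenerate_iff_separatingLeft h.isRefl).2 hl

/-- A nondegenerate alternating bilinear form forces even dimension. -/
lemma even_of_alt_nondeg :
    ∀ (k : ℕ) {V : Type} [AddCommGroup V] [Module ℂ V] [FiniteDimensional ℂ V]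
      (B : LinearMap.BilinForm ℂ V), B.IsAlt → B.Nondegenerate →
      Module.finrank ℂ V = k → Even k := by
  intro k
  induction k using Nat.strong_induction_on with
  | _ k ih =>
    intro V _ _ _ B halt hnd hk
    rcases Nat.eq_zero_or_pos k with h0 | hpos
    · simp [h0]
    have : Nontrivial V := by
      apply Module.finrank_pos_iff (R := ℂ) (M := V) |>.1
      omega
    obtain ⟨x, hx⟩ := exists_ne (0 : V)
    have hrefl : LinearMap.BilinForm.IsRefl B := halt.isRefl
    obtain ⟨y, hy⟩ : ∃ y, B x y ≠ 0 := by
      by_contra h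
      push_neg at h
      exact hx (hnd.1 x h)
    have hyx : B y x ≠ 0 := by
      intro h
      apply hy
      have := halt.neg_eq x y
      rw [h] at this
      linear_combination -this
    have expand : ∀ (a b : ℂ) (z : V), B (a • x + b • y) z = a * B x z + b * B y z := by
      intro a b z
      simp only [LinearMap.BilinForm.add_left, LinearMap.BilinForm.smul_left]
    have hli : LinearIndependent ℂ ![x, y] := by
      rw [LinearIndependent.pair_iff]
      intro s t hst
      have h1 : B (s • x + t • y) y = 0 := by rw [hst]; simp
      have h2 : B (s • x + t • y) x = 0 := by rw [hst]; simp
      rw [expand, halt y] at h1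
      rw [expand, halt x] at h2
      have hs : s = 0 := by
        have : s * B x y = 0 := by linear_combination h1
        exact (mul_eq_zero.1 this).resolve_right hy
      refine ⟨hs, ?_⟩
      have : t * B y x = 0 := by rw [hs] at h2; linear_combination h2
      exact (mul_eq_zero.1 this).resolve_right hyx
    set W := Submodule.span ℂ (Set.range ![x, y]) with hWdef
    have hxW : x ∈ W := Submodule.subset_span ⟨0, rfl⟩
    have hyW : y ∈ W := Submodule.subset_span ⟨1, rfl⟩
    have hW2 : Module.finrank ℂ W = 2 := by
      rw [finrank_span_eq_card hli]; simp
    have hrest : (B.restrict W).Nondegenerate := by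
      refine nondeg_of_alt_sepLeft _ (fun v => halt v) ?_
      rintro ⟨w, hw⟩ hww
      obtain ⟨c, hc⟩ := (Submodule.mem_span_range_iff_exists_fun ℂ).1 hw
      rw [Fin.sum_univ_two] at hc
      simp only [Matrix.cons_val_zero, Matrix.cons_val_one, Matrix.head_cons] at hc
      have h1 := hww ⟨y, hyW⟩
      have h2 := hww ⟨x, hxW⟩
      simp only [LinearMap.BilinForm.restrict_apply, LinearMap.domRestrict_apply] at h1 h2
      rw [← hc, expand, halt y] at h1
      rw [← hc, expand, halt x] at h2
      have hc0 : c 0 = 0 := by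
        have : c 0 * B x y = 0 := by linear_combination h1
        exact (mul_eq_zero.1 this).resolve_right hy
      have hc1 : c 1 = 0 := by
        have : c 1 * B y x = 0 := by rw [hc0] at h2; linear_combination h2
        exact (mul_eq_zero.1 this).resolve_right hyx
      apply Subtype.ext
      simp only
      rw [← hc, hc0, hc1]
      simp
    have hcompl : IsCompl W (B.orthogonal W) :=
      LinearMap.BilinForm.isCompl_orthogonal_of_restrict_nondegenerate hrefl hrest
    have hsum : Module.finrank ℂ W + Module.finrank ℂ (B.orthogonal W)
        = Module.finrank ℂ V := Submodule.finrank_add_eq_of_isCompl hcompl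
    have hOnd : (B.restrict (B.orthogonal W)).Nondegenerate := by
      refine nondeg_of_alt_sepLeft _ (fun v => halt v) ?_
      rintro ⟨v, hv⟩ hvv
      apply Subtype.ext
      simp only
      apply hnd.1
      intro t
      obtain ⟨w, p, hw, hp, rfl⟩ := Submodule.codisjoint_iff_exists_add_eq.1 hcompl.codisjoint t
      have e1 : B v w = 0 := hrefl w v (hv w hw)
      have e2 : B v p = 0 := by
        have := hvv ⟨p, hp⟩
        rwa [LinearMap.BilinForm.restrict_apply] at this
      rw [map_add, e1, e2, add_zero]
    have hOalt : (B.restrict (B.orthogonal W)).IsAlt := fun v => halt v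
    have hlt : Module.finrank ℂ (B.orthogonal W) < k := by omega
    have heven := ih _ hlt (B.restrict (B.orthogonal W)) hOalt hOnd rfl
    obtain ⟨r, hr⟩ := heven
    exact ⟨r + 1, by omega⟩

/-- If `u ∈ M_{2n}(ℂ)` is a self-adjoint unitary commuting with the quaternionic
structure `Θ` on `ℂ^{2n}`, then its `+1`-eigenspace has even complex dimension. -/
theorem plus_one_eigenspace_even_dim (n : ℕ)
    (u : Matrix (Fin n ⊕ Fin n) (Fin n ⊕ Fin n) ℂ)
    (hsa : u.IsHermitian)
    (hunit : u * u = 1)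
    (hcomm : ∀ v : Fin n ⊕ Fin n → ℂ, u.mulVec (ThetaVec n v) = ThetaVec n (u.mulVec v)) :
    Even (Module.finrank ℂ ↥(Module.End.eigenspace (Matrix.toLin' u) 1)) := by
  set J := Jmat n with hJdef
  set E := Module.End.eigenspace (Matrix.toLin' u) 1 with hEdef
  -- the symplectic form
  set B : LinearMap.BilinForm ℂ (Fin n ⊕ Fin n → ℂ) :=
    LinearMap.mk₂ ℂ (fun xv yv => xv ⬝ᵥ (J *ᵥ yv))
      (fun x x' y => by simp [add_dotProduct])
      (fun c x y => by simp [smul_dotProduct])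
      (fun x y y' => by simp [mulVec_add, dotProduct_add])
      (fun c x y => by simp [mulVec_smul, dotProduct_smul]) with hBdef
  have hBapp : ∀ x y, B x y = x ⬝ᵥ (J *ᵥ y) := fun x y => rfl
  have hJJ : J * J = -1 := by
    rw [hJdef]
    simp only [Jmat, Matrix.fromBlocks_multiply]
    simp only [Matrix.mul_one, Matrix.mul_zero, Matrix.zero_mul, Matrix.mul_neg, Matrix.one_mul,
      add_zero, zero_add, neg_zero]
    have : (-1 : Matrix (Fin n ⊕ Fin n) (Fin n ⊕ Fin n) ℂ) = fromBlocks (-1) (-0) (-0) (-1) := by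
      rw [← Matrix.fromBlocks_neg, Matrix.fromBlocks_one]
    rw [this, neg_zero]
  -- commutation: u * J = J * uᵀ
  have hUJ : u * J = J * uᵀ := by
    ext i j
    have h := congrFun (hcomm (fun i => star ((Pi.single j 1 : Fin n ⊕ Fin n → ℂ) i))) i
    simp only [ThetaVec] at h
    have hss : (fun i' => starRingEnd ℂ ((fun i'' => star ((Pi.single j 1 : Fin n ⊕ Fin n → ℂ) i'')) i'))
        = (Pi.single j 1 : Fin n ⊕ Fin n → ℂ) := by
      funext i'
      simp
    rw [hss] at h
    have hherm : ∀ a b, star (u a b) = u b a := by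
      intro a b
      have := hsa
      rw [Matrix.IsHermitian] at this
      conv_rhs => rw [← this]
      simp [Matrix.conjTranspose_apply]
    have hr : (fun i' => starRingEnd ℂ ((u *ᵥ fun i'' => star ((Pi.single j 1 : Fin n ⊕ Fin n → ℂ) i'')) i'))
        = uᵀ *ᵥ (Pi.single j 1 : Fin n ⊕ Fin n → ℂ) := by
      funext a
      simp only [Matrix.mulVec, dotProduct, map_sum, _root_.map_mul,
        Matrix.transpose_apply, starRingEnd_apply, star_star]
      congr 1
      funext b
      rw [hherm a b]
    rw [hr] at h
    rw [Matrix.mulVec_mulVec, Matrix.mulVec_mulVec, Matrix.mulVec_single,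
      Matrix.mulVec_single] at h
    rw [hJdef]
    simpa using h
  -- key : uᵀ * J = J * u
  have hkey : uᵀ * J = J * u := by
    have e1 : J * (u * J) = -uᵀ := by
      rw [hUJ, ← mul_assoc, hJJ, neg_one_mul]
    have e2 : uᵀ = -(J * (u * J)) := by rw [e1, neg_neg]
    calc uᵀ * J = -(J * (u * J)) * J := by rw [← e2]
      _ = -(J * u * (J * J)) := by noncomm_ring
      _ = J * u := by rw [hJJ]; noncomm_ring
  -- symmetry of u for B
  have hsym : ∀ x y, B (u *ᵥ x) y = B x (u *ᵥ y) := by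
    intro x y
    rw [hBapp, hBapp]
    rw [Matrix.mulVec_mulVec, Matrix.dotProduct_mulVec, Matrix.dotProduct_mulVec,
      ← Matrix.vecMul_transpose, Matrix.vecMul_vecMul, hkey, ← Matrix.vecMul_vecMul,
      Matrix.vecMul_vecMul]
  -- B is alternating
  have hJT : Jᵀ = -J := by
    rw [hJdef]
    simp only [Jmat, Matrix.fromBlocks_transpose, Matrix.transpose_zero, Matrix.transpose_one,
      Matrix.transpose_neg]
    have : (-(fromBlocks 0 (-1) 1 0) : Matrix (Fin n ⊕ Fin n) (Fin n ⊕ Fin n) ℂ)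
        = fromBlocks (-0) (- -1) (-1) (-0) := by rw [← Matrix.fromBlocks_neg]
    rw [this]
    simp
  have halt : B.IsAlt := by
    intro x
    rw [hBapp]
    have h : x ⬝ᵥ (J *ᵥ x) = -(x ⬝ᵥ (J *ᵥ x)) := by
      conv_lhs => rw [Matrix.dotProduct_mulVec, ← Matrix.mulVec_transpose, hJT,
        Matrix.neg_mulVec, neg_dotProduct, dotProduct_comm]
    linear_combination h / 2
  -- B is nondegenerate
  have hnd : B.Nondegenerate := by
    refine nondeg_of_alt_sepLeft _ halt ?_
    intro x h
    have hv : x ᵥ* J = 0 := by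
      funext i
      have := h (Pi.single i 1)
      rw [hBapp, Matrix.dotProduct_mulVec, dotProduct_single] at this
      simpa using this
    have : x ᵥ* (J * J) = 0 := by
      rw [← Matrix.vecMul_vecMul, hv, Matrix.zero_vecMul]
    rw [hJJ] at this
    simpa [Matrix.vecMul_neg, Matrix.vecMul_one, neg_eq_zero] using this
  -- membership in E
  have hmem : ∀ z, z ∈ E ↔ u *ᵥ z = z := by
    intro z
    rw [hEdef, Module.End.mem_eigenspace_iff]
    simp [Matrix.toLin'_apply]
  -- restriction of B to E is nondegenerate
  have hENd : (B.restrict E).Nondegenerate := by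
    refine nondeg_of_alt_sepLeft _ (fun v => halt v) ?_
    rintro ⟨x, hxE⟩ hbx
    have hx : u *ᵥ x = x := (hmem x).1 hxE
    apply Subtype.ext
    simp only
    apply hnd.1
    intro y
    have hyE : (2⁻¹ : ℂ) • (y + u *ᵥ y) ∈ E := by
      rw [hmem, Matrix.mulVec_smul, Matrix.mulVec_add, Matrix.mulVec_mulVec, hunit,
        Matrix.one_mulVec]
      rw [add_comm]
    have h1 : B x ((2⁻¹ : ℂ) • (y + u *ᵥ y)) = 0 := by
      have := hbx ⟨_, hyE⟩
      rwa [LinearMap.BilinForm.restrict_apply] at this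
    have h2 : B x (u *ᵥ y) = B x y := by rw [← hsym, hx]
    have h3 : B x y = B x ((2⁻¹ : ℂ) • (y + u *ᵥ y)) := by
      rw [LinearMap.map_smul, LinearMap.map_add, h2, smul_eq_mul]
      ring
    rw [h3, h1]
  have hEalt : (B.restrict E).IsAlt := fun v => halt v
  exact even_of_alt_nondeg _ (B.restrict E) hEalt hENd rfl
end

section
/- Let X be a topological space with involution ι such that H¹_{ℤ₂}(X) = 0 in the sense that every continuous ι-invariant map X → U(1) is homotopic through invariant maps to a constant. Then every ℤ₂-equivariant continuous map q : X → U(2n) (with involution u ↦ Θ u* Θ⁻¹ on U(2n)) is equivariantly homotopic to a map taking values in SU(2n). -/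
open Matrix unitInterval

/-- The involution `u ↦ Θ u* Θ⁻¹ = J · conj(u*) · J⁻¹` on `U(2n)` induced by the standard
quaternionic structure `Θ = J ∘ conj` on `ℂ^{2n}`. -/
noncomputable def sharpMat (n : ℕ) (v : Matrix (Fin n ⊕ Fin n) (Fin n ⊕ Fin n) ℂ) :
    Matrix (Fin n ⊕ Fin n) (Fin n ⊕ Fin n) ℂ :=
  Jmat n * ((star v).map (starRingEnd ℂ)) * (Jmat n)⁻¹

lemma Jmat_isUnit (n : ℕ) : IsUnit (Jmat n) := by
  have h : Jmat n * (Matrix.fromBlocks 0 1 (-1) 0) = 1 := by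
    rw [Jmat, Matrix.fromBlocks_multiply]
    simp [← Matrix.fromBlocks_one]
  exact ⟨⟨Jmat n, _, h, mul_eq_one_comm.mp h⟩, rfl⟩

lemma det_sharp (n : ℕ) (v : Matrix (Fin n ⊕ Fin n) (Fin n ⊕ Fin n) ℂ) :
    (sharpMat n v).det = v.det := by
  rw [sharpMat, Matrix.det_conj (Jmat_isUnit n)]
  have h1 : ((star v).map (starRingEnd ℂ)) = (starRingEnd ℂ).mapMatrix (star v) := rfl
  rw [h1, ← RingHom.map_det]
  have h2 : star v = v.conjTranspose := rfl
  rw [h2, Matrix.det_conjTranspose]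
  simp

lemma sharp_smul (n : ℕ) (c : ℂ) (v : Matrix (Fin n ⊕ Fin n) (Fin n ⊕ Fin n) ℂ) :
    sharpMat n (c • v) = c • sharpMat n v := by
  have h : ((star (c • v)).map (starRingEnd ℂ)) = c • ((star v).map (starRingEnd ℂ)) := by
    ext i j
    simp [Matrix.map_apply, Matrix.smul_apply, star_smul, mul_comm]
  rw [sharpMat, h, Matrix.mul_smul, Matrix.smul_mul]
  rfl


lemma exists_invariant_log {X : Type*} [TopologicalSpace X] [CompactSpace X] (ι : X → X)
    (F : C(I × X, ℂ)) (c : ℂ)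
    (h1 : ∀ x, F (1, x) = c)
    (hn : ∀ t x, ‖F (t, x)‖ = 1)
    (hiF : ∀ t x, F (t, ι x) = F (t, x)) :
    ∃ θ : C(X, ℝ), (∀ x, θ (ι x) = θ x) ∧ ∀ x, Complex.exp (θ x * Complex.I) = F (0, x) := by
  have hG : UniformContinuous (F.curry) :=
    CompactSpace.uniformContinuous_of_continuous (map_continuous F.curry)
  rw [Metric.uniformContinuous_iff] at hG
  obtain ⟨δ, hδ0, hδ⟩ := hG 1 one_pos
  obtain ⟨k, hk⟩ := exists_nat_one_div_lt hδ0
  set K : ℕ := k + 1 with hK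
  have hKpos : (0:ℝ) < K := by positivity
  set u : ℕ → I := fun j => Set.projIcc 0 1 zero_le_one ((j : ℝ) / K) with hu
  have hu0 : u 0 = 0 := by simp [hu, Set.projIcc]
  have huK : u K = 1 := by simp [hu, div_self hKpos.ne', Set.projIcc]
  have hstep : ∀ j : ℕ, dist (u j) (u (j+1)) < δ := by
    intro j
    have hl := (LipschitzWith.projIcc (zero_le_one (α := ℝ))).dist_le_mul
      ((j : ℝ) / K) (((j:ℝ) + 1) / K)
    have hd : dist ((j : ℝ) / K) (((j:ℝ)+1) / K) = 1/K := by
      rw [Real.dist_eq, div_sub_div_same]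
      have he : ((j:ℝ) - ((j:ℝ)+1)) = -1 := by ring
      rw [he, abs_div, abs_neg, abs_one, abs_of_pos hKpos]
    have hcast : ((j+1 : ℕ) : ℝ) = (j:ℝ) + 1 := by push_cast; ring
    have : dist (u j) (u (j+1)) ≤ 1/K := by
      rw [hu]; simp only [hcast]
      calc _ ≤ ↑(1:NNReal) * dist ((j : ℝ) / K) (((j:ℝ)+1) / K) := hl
        _ = 1/K := by rw [hd]; simp
    have hlt : (1:ℝ)/K < δ := by
      rw [hK]; push_cast; exact hk
    linarith
  -- pointwise closeness
  have hclose : ∀ (j : ℕ) (x : X), ‖F (u j, x) - F (u (j+1), x)‖ < 1 := by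
    intro j x
    have h2 := hδ (hstep j)
    have h3 := ContinuousMap.dist_apply_le_dist (f := F.curry (u j)) (g := F.curry (u (j+1))) x
    have : dist (F (u j, x)) (F (u (j+1), x)) < 1 := lt_of_le_of_lt h3 h2
    rwa [dist_eq_norm] at this
  rcases isEmpty_or_nonempty X with hE | hNE
  · exact ⟨0, fun x => (hE.false x).elim, fun x => (hE.false x).elim⟩
  set r : ℕ → X → ℂ := fun j x => F (u j, x) * (starRingEnd ℂ) (F (u (j+1), x)) with hr
  have hrnorm : ∀ j x, ‖r j x‖ = 1 := by
    intro j x; rw [hr]; simp [norm_mul, hn]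
  have hbb : ∀ (t : I) (x : X), F (t, x) * (starRingEnd ℂ) (F (t, x)) = 1 := by
    intro t x
    rw [Complex.mul_conj]
    have h : Complex.normSq (F (t,x)) = 1 := by
      rw [Complex.normSq_eq_norm_sq, hn]; norm_num
    rw [h]; norm_num
  have hre : ∀ j x, 0 < (r j x).re := by
    intro j x
    have key : r j x - 1 = (F (u j, x) - F (u (j+1), x)) * (starRingEnd ℂ) (F (u (j+1), x)) := by
      simp only [hr]
      rw [sub_mul, hbb]
    have hlt : ‖r j x - 1‖ < 1 := by
      rw [key, norm_mul, RCLike.norm_conj, hn, mul_one]; exact hclose j x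
    have h2 : |(r j x - 1).re| ≤ ‖r j x - 1‖ := Complex.abs_re_le_norm _
    rw [Complex.sub_re, Complex.one_re] at h2
    have := abs_lt.mp (lt_of_le_of_lt h2 hlt)
    linarith [this.1]
  have hexp_arg : ∀ z : ℂ, ‖z‖ = 1 → Complex.exp (z.arg * Complex.I) = z := by
    intro z hz
    have h := Complex.norm_mul_exp_arg_mul_I z
    rw [hz, Complex.ofReal_one, one_mul] at h
    exact h
  -- continuity of each r j
  have hrc : ∀ j, Continuous (fun x => r j x) := by
    intro j
    have h1c : Continuous (fun x : X => F (u j, x)) :=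
      F.continuous.comp (continuous_const.prodMk continuous_id)
    have h2c : Continuous (fun x : X => F (u (j+1), x)) :=
      F.continuous.comp (continuous_const.prodMk continuous_id)
    exact h1c.mul (continuous_star.comp h2c)
  have hargc : ∀ j, Continuous (fun x => (r j x).arg) := by
    intro j
    rw [continuous_iff_continuousAt]
    intro x
    exact (Complex.continuousAt_arg (Complex.mem_slitPlane_iff.2 (Or.inl (hre j x)))).comp
      (hrc j).continuousAt
  refine ⟨⟨fun x => c.arg + ∑ j ∈ Finset.range K, (r j x).arg, ?_⟩, ?_, ?_⟩
  · exact continuous_const.add (continuous_finset_sum _ fun j _ => hargc j)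
  · intro x
    simp only [ContinuousMap.coe_mk]
    congr 1
    refine Finset.sum_congr rfl fun j _ => ?_
    rw [hr]; simp only [hiF]
  · intro x
    obtain ⟨x₀⟩ := hNE
    have hc : ‖c‖ = 1 := by rw [← h1 x₀]; exact hn 1 x₀
    have htel : ∀ m : ℕ, (∏ j ∈ Finset.range m, r j x) * F (u m, x) = F (u 0, x) := by
      intro m
      induction m with
      | zero => simp
      | succ m ih =>
        rw [Finset.prod_range_succ, mul_assoc]
        have : r m x * F (u (m+1), x) = F (u m, x) := by
          rw [hr]
          simp only []
          rw [mul_assoc]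
          have hcb : (starRingEnd ℂ) (F (u (m+1), x)) * F (u (m+1), x) = 1 := by
            rw [mul_comm]; exact hbb _ _
          rw [hcb, mul_one]
        rw [this, ih]
    simp only [ContinuousMap.coe_mk]
    rw [Complex.ofReal_add, add_mul, Complex.exp_add, hexp_arg c hc]
    have hsum : Complex.exp ((↑(∑ j ∈ Finset.range K, (r j x).arg) : ℂ) * Complex.I)
        = ∏ j ∈ Finset.range K, r j x := by
      rw [Complex.ofReal_sum, Finset.sum_mul, Complex.exp_sum]
      exact Finset.prod_congr rfl fun j _ => hexp_arg _ (hrnorm j x)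
    rw [hsum]
    have := htel K
    rw [huK, h1 x, hu0] at this
    rw [mul_comm] at this
    exact this

/-- If every invariant `U(1)`-valued map on `(X, ι)` is invariantly
null-homotopic (i.e. `H¹_{ℤ₂}(X) = 0`), then every `ℤ₂`-equivariant continuous map
`q : X → U(2n)` (with the involution `u ↦ Θ u* Θ⁻¹` on `U(2n)`) is equivariantly homotopic
to a map taking values in `SU(2n)`. -/
theorem equivariant_retraction_to_SU (n : ℕ)
    (X : Type*) [TopologicalSpace X] [CompactSpace X]
    (ι : X → X) (hι : Continuous ι) (hinv : ∀ x, ι (ι x) = x)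
    (hH1 : ∀ f : C(X, ℂ), (∀ x, ‖f x‖ = 1) → (∀ x, f (ι x) = f x) →
      ∃ (F : C(I × X, ℂ)) (c : ℂ),
        (∀ x, F (0, x) = f x) ∧ (∀ x, F (1, x) = c) ∧
        (∀ t x, ‖F (t, x)‖ = 1) ∧ (∀ t x, F (t, ι x) = F (t, x)))
    (q : C(X, Matrix (Fin n ⊕ Fin n) (Fin n ⊕ Fin n) ℂ))
    (hqu : ∀ x, q x ∈ Matrix.unitaryGroup (Fin n ⊕ Fin n) ℂ)
    (hqeq : ∀ x, q (ι x) = sharpMat n (q x)) :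
    ∃ Q : C(I × X, Matrix (Fin n ⊕ Fin n) (Fin n ⊕ Fin n) ℂ),
      (∀ x, Q (0, x) = q x) ∧
      (∀ t x, Q (t, x) ∈ Matrix.unitaryGroup (Fin n ⊕ Fin n) ℂ) ∧
      (∀ t x, Q (t, ι x) = sharpMat n (Q (t, x))) ∧
      (∀ x, (Q (1, x)).det = 1) := by

  rcases Nat.eq_zero_or_pos n with hn0 | hnpos
  · subst hn0
    refine ⟨⟨fun p => q p.2, q.continuous.comp continuous_snd⟩, fun x => rfl,
      fun t x => hqu x, fun t x => hqeq x, fun x => Matrix.det_isEmpty⟩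
  · have hnne : (n : ℝ) ≠ 0 := Nat.cast_ne_zero.mpr hnpos.ne'
    set f : C(X, ℂ) := ⟨fun x => (q x).det, q.continuous.matrix_det⟩ with hf
    have hf1 : ∀ x, ‖f x‖ = 1 := by
      intro x
      have h := Matrix.mem_unitaryGroup_iff.mp (hqu x)
      have hd : (q x).det * star (q x).det = 1 := by
        have hdet := congrArg Matrix.det h
        rwa [Matrix.det_mul, Matrix.det_one, Matrix.star_eq_conjTranspose,
          Matrix.det_conjTranspose] at hdet
      have hnsq : Complex.normSq (q x).det = 1 := by
        rw [show (star (q x).det) = (starRingEnd ℂ) (q x).det from rfl,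
          Complex.mul_conj] at hd
        exact_mod_cast hd
      have h2 : ‖(q x).det‖ ^ 2 = 1 := by
        rw [Complex.sq_norm]; exact hnsq
      have := norm_nonneg (q x).det
      show ‖(q x).det‖ = 1
      nlinarith
    have hfinv : ∀ x, f (ι x) = f x := by
      intro x
      show (q (ι x)).det = (q x).det
      rw [hqeq x, det_sharp]
    obtain ⟨F, c, h0, h1, hnorm, hiF⟩ := hH1 f hf1 hfinv
    obtain ⟨θ, hθinv, hθexp⟩ := exists_invariant_log ι F c h1 hnorm hiF
    have hθq : ∀ x, Complex.exp (↑(θ x) * Complex.I) = (q x).det := by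
      intro x; rw [hθexp x, h0 x]; rfl
    set lam : I × X → ℂ :=
      fun p => Complex.exp (↑(-((p.1 : ℝ) * θ p.2 / (2 * n))) * Complex.I) with hlam
    have hlamc : Continuous lam := by
      apply Complex.continuous_exp.comp
      apply Continuous.mul _ continuous_const
      apply Complex.continuous_ofReal.comp
      have : Continuous fun p : I × X => (p.1 : ℝ) :=
        continuous_subtype_val.comp continuous_fst
      exact ((this.mul (θ.continuous.comp continuous_snd)).div_const _).neg
    have hlamstar : ∀ p, lam p * star (lam p) = 1 := by
      intro p
      set s : ℝ := -((p.1 : ℝ) * θ p.2 / (2 * n)) with hs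
      show Complex.exp (↑s * Complex.I) * star (Complex.exp (↑s * Complex.I)) = 1
      rw [show star (Complex.exp (↑s * Complex.I)) =
        (starRingEnd ℂ) (Complex.exp (↑s * Complex.I)) from rfl,
        ← Complex.exp_conj, _root_.map_mul, Complex.conj_ofReal, Complex.conj_I,
        ← Complex.exp_add, mul_neg, _root_.add_neg_cancel, Complex.exp_zero]
    refine ⟨⟨fun p => lam p • q p.2, hlamc.smul (q.continuous.comp continuous_snd)⟩,
      ?_, ?_, ?_, ?_⟩
    · intro x
      simp only [ContinuousMap.coe_mk, hlam]
      norm_num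
    · intro t x
      simp only [ContinuousMap.coe_mk]
      rw [Matrix.mem_unitaryGroup_iff, star_smul, Matrix.smul_mul, Matrix.mul_smul,
        smul_smul, Matrix.mem_unitaryGroup_iff.mp (hqu x), hlamstar, one_smul]
    · intro t x
      simp only [ContinuousMap.coe_mk]
      have hlaminv : lam (t, ι x) = lam (t, x) := by
        simp only [hlam, hθinv]
      rw [hlaminv, hqeq x, ← sharp_smul]
    · intro x
      simp only [ContinuousMap.coe_mk]
      rw [Matrix.det_smul]
      have hcard : Fintype.card (Fin n ⊕ Fin n) = 2 * n := by
        simp [Fintype.card_sum]; ring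
      rw [hcard]
      have hone : lam (1, x) = Complex.exp (↑(-(θ x / (2 * n))) * Complex.I) := by
        simp [hlam]
      rw [hone, ← Complex.exp_nat_mul]
      have hmul : ((2 * n : ℕ) : ℂ) * (↑(-(θ x / (2 * (n:ℝ)))) * Complex.I)
          = ↑(-(θ x)) * Complex.I := by
        have hnC : (n:ℂ) ≠ 0 := Nat.cast_ne_zero.mpr hnpos.ne'
        push_cast
        field_simp
      rw [hmul, ← hθq x, ← Complex.exp_add]
      push_cast
      ring_nf
      exact Complex.exp_zero
end
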